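/- Knight's identity: for any real numbers u ≠ 0 and v, ρ_τ(u - v) - ρ_τ(u) = -v·ψ_τ(u) + ∫_0^v [I(u ≤ s) - I(u < 0)] ds, where ψ_τ(u) = τ - I(u < 0). -/

import Mathlib

open MeasureTheory Set intervalIntegral

lemma step_indicator (u : ℝ) :
    (fun s => if u ≤ s then (1:ℝ) else 0) = Set.indicator (Set.Ici u) (fun _ => (1:ℝ)) := by
  ext s; simp [Set.indicator_apply, Set.mem_Ici]

lemma step_intable (u a b : ℝ) :
    IntervalIntegrable (fun s => if u ≤ s then (1:ℝ) else 0) volume a b := by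
  rw [step_indicator, intervalIntegrable_iff]
  have h : IntegrableOn (fun _ => (1:ℝ)) (Set.uIoc a b) volume :=
    integrableOn_const measure_Ioc_lt_top.ne
  exact h.indicator measurableSet_Ici

lemma step_int_le (u a b : ℝ) (hab : a ≤ b) :
    ∫ s in a..b, (if u ≤ s then (1:ℝ) else 0) = max b u - max a u := by
  rw [step_indicator, intervalIntegral.integral_of_le hab, setIntegral_indicator measurableSet_Ici,
    setIntegral_const, smul_eq_mul, mul_one, Set.inter_comm]
  have h1 : volume (Set.Ici u ∩ Set.Ioc a b) = ENNReal.ofReal (b - max a u) := by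
    apply le_antisymm
    · calc volume (Set.Ici u ∩ Set.Ioc a b) ≤ volume (Set.Icc (max a u) b) := by
            apply measure_mono; rintro s ⟨h1, h2, h3⟩
            exact ⟨max_le h2.le h1, h3⟩
          _ = ENNReal.ofReal (b - max a u) := Real.volume_Icc
    · calc ENNReal.ofReal (b - max a u) = volume (Set.Ioc (max a u) b) := Real.volume_Ioc.symm
          _ ≤ volume (Set.Ici u ∩ Set.Ioc a b) := by
            apply measure_mono; rintro s ⟨h1, h2⟩
            exact ⟨(le_max_right a u).trans h1.le, (le_max_left a u).trans_lt h1, h2⟩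
  rw [measureReal_def, h1]
  rcases le_total u b with h2 | h2
  · rw [ENNReal.toReal_ofReal (by simp only [sub_nonneg]; exact max_le hab h2),
      max_eq_left h2]
  · have ha : a ≤ u := hab.trans h2
    rw [ENNReal.ofReal_eq_zero.2 (by linarith [le_max_right a u] : b - max a u ≤ 0),
      max_eq_right ha, max_eq_right h2]
    simp

lemma step_int (u v : ℝ) :
    ∫ s in (0:ℝ)..v, (if u ≤ s then (1:ℝ) else 0) = max v u - max 0 u := by
  rcases le_total 0 v with h | h
  · exact step_int_le u 0 v h
  · rw [intervalIntegral.integral_symm, step_int_le u v 0 h]; ring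

noncomputable def rho (τ u : ℝ) : ℝ := u * (τ - if u < 0 then 1 else 0)

theorem knight_identity (τ : ℝ) (hτ : τ ∈ Set.Ioo (0:ℝ) 1) (u v : ℝ) (hu : u ≠ 0) :
    rho τ (u - v) - rho τ u
      = -v * (τ - if u < 0 then 1 else 0)
        + ∫ s in (0:ℝ)..v, ((if u ≤ s then (1:ℝ) else 0) - (if u < 0 then 1 else 0)) := by
  rw [intervalIntegral.integral_sub (step_intable u 0 v) (intervalIntegrable_const),
    step_int, intervalIntegral.integral_const, smul_eq_mul, sub_zero]
  unfold rho
  rcases lt_trichotomy u 0 with h | h | h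
  · simp only [if_pos h]
    rw [max_eq_left h.le]
    rcases lt_or_ge (u - v) 0 with h2 | h2
    · simp only [if_pos h2]; rw [max_eq_left (by linarith : u ≤ v)]; ring
    · simp only [if_neg (not_lt.2 h2)]; rw [max_eq_right (by linarith : v ≤ u)]; ring
  · exact absurd h hu
  · simp only [if_neg (not_lt.2 h.le)]
    rw [max_eq_right h.le]
    rcases lt_or_ge (u - v) 0 with h2 | h2
    · simp only [if_pos h2]; rw [max_eq_left (by linarith : u ≤ v)]; ring
    · simp only [if_neg (not_lt.2 h2)]; rw [max_eq_right (by linarith : v ≤ u)]; ring
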